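/- Let N and d be positive integers, let u, v : Fin N → ℂ each have exactly d nonzero entries, and let r_u, r_v > 0 satisfy |u_i| ≤ r_u and |v_i| ≤ r_v for all i. Define ψ, φ : Fin N × Fin 2 × Fin 2 → ℂ by: ψ(i,0,1) = (1/√d)·√(1 − |v_i|²/r_v²)·conj(v_i)/|v_i| if v_i ≠ 0 (and 0 if v_i = 0), ψ(i,1,1) = (1/√d)·v_i/r_v, and ψ = 0 on all other components; φ(i,1,0) = (1/√d)·√(1 − |u_i|²/r_u²)·conj(u_i)/|u_i| if u_i ≠ 0 (and 0 if u_i = 0), φ(i,1,1) = (1/√d)·u_i/r_u, and φ = 0 on all other components. Then ‖ψ‖ = 1, ‖φ‖ = 1, and ⟨φ,ψ⟩ = ⟨u,v⟩/(d·r_u·r_v), where ⟨u,v⟩ = Σ_i conj(u_i)·v_i. -/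

import Mathlib

open scoped InnerProductSpace

lemma aux_sq (d : ℕ) (hd : 0 < d) (r : ℝ) (hr : 0 < r) (z : ℂ) (hz : ‖z‖ ≤ r) :
    ‖(if z = 0 then (0:ℂ) else
        ((Real.sqrt d)⁻¹ * Real.sqrt (1 - (‖z‖) ^ 2 / r ^ 2) : ℂ) *
          starRingEnd ℂ z / (‖z‖ : ℂ))‖ ^ 2
    + ‖(((Real.sqrt d)⁻¹ : ℂ) * z / (r : ℂ))‖ ^ 2
    = if z = 0 then 0 else (d : ℝ)⁻¹ := by
  have hdr : (0:ℝ) < Real.sqrt d := Real.sqrt_pos.mpr (by exact_mod_cast hd)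
  by_cases h : z = 0
  · simp [h]
  · have habs : (0:ℝ) < ‖z‖ := by
      simpa [norm_pos_iff] using h
    have hs : (0:ℝ) ≤ 1 - (‖z‖)^2 / r^2 := by
      rw [sub_nonneg, div_le_one (by positivity)]
      exact pow_le_pow_left₀ (norm_nonneg z) hz 2
    simp only [h, if_false]
    have h1 : ‖((Real.sqrt d)⁻¹ * Real.sqrt (1 - (‖z‖) ^ 2 / r ^ 2) : ℂ) *
          starRingEnd ℂ z / (‖z‖ : ℂ)‖
        = (Real.sqrt d)⁻¹ * Real.sqrt (1 - (‖z‖) ^ 2 / r ^ 2) := by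
      rw [norm_div, norm_mul]
      simp only [norm_mul, Complex.norm_real, Complex.norm_conj, Real.norm_eq_abs]
      rw [abs_of_nonneg (inv_nonneg.mpr (Real.sqrt_nonneg _)),
        abs_of_nonneg (Real.sqrt_nonneg _), mul_div_assoc, abs_of_nonneg habs.le, div_self habs.ne', mul_one]
    have h2 : ‖(((Real.sqrt d)⁻¹ : ℂ) * z / (r : ℂ))‖
        = (Real.sqrt d)⁻¹ * ‖z‖ / r := by
      rw [norm_div, norm_mul, norm_inv]
      simp only [Complex.norm_real, Real.norm_eq_abs]
      rw [abs_of_nonneg (Real.sqrt_nonneg _), abs_of_nonneg hr.le]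
    rw [h1, h2]
    have hsq : Real.sqrt (1 - (‖z‖) ^ 2 / r ^ 2) ^ 2
        = 1 - (‖z‖) ^ 2 / r ^ 2 := Real.sq_sqrt hs
    have hinv : ((Real.sqrt d)⁻¹)^2 = (d:ℝ)⁻¹ := by
      rw [inv_pow, Real.sq_sqrt (by positivity)]
    rw [mul_pow, div_pow, mul_pow, hsq, hinv]
    field_simp
    ring

theorem stmt_3 (N d : ℕ) (hN : 0 < N) (hd : 0 < d) (u v : Fin N → ℂ)
    (hud : (Finset.univ.filter fun i => u i ≠ 0).card = d)
    (hvd : (Finset.univ.filter fun i => v i ≠ 0).card = d)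
    (ru rv : ℝ) (hru : 0 < ru) (hrv : 0 < rv)
    (hubd : ∀ i, ‖u i‖ ≤ ru) (hvbd : ∀ i, ‖v i‖ ≤ rv)
    (ψ φ : EuclideanSpace ℂ (Fin N × Fin 2 × Fin 2))
    (hψ01 : ∀ i, ψ (i, 0, 1) =
      if v i = 0 then 0 else
        ((Real.sqrt d)⁻¹ * Real.sqrt (1 - (‖v i‖) ^ 2 / rv ^ 2) : ℂ) *
          starRingEnd ℂ (v i) / (‖v i‖ : ℂ))
    (hψ11 : ∀ i, ψ (i, 1, 1) = ((Real.sqrt d)⁻¹ : ℂ) * v i / (rv : ℂ))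
    (hψ0 : ∀ i j, ψ (i, j, 0) = 0)
    (hφ10 : ∀ i, φ (i, 1, 0) =
      if u i = 0 then 0 else
        ((Real.sqrt d)⁻¹ * Real.sqrt (1 - (‖u i‖) ^ 2 / ru ^ 2) : ℂ) *
          starRingEnd ℂ (u i) / (‖u i‖ : ℂ))
    (hφ11 : ∀ i, φ (i, 1, 1) = ((Real.sqrt d)⁻¹ : ℂ) * u i / (ru : ℂ))
    (hφ0 : ∀ i k, φ (i, 0, k) = 0) :
    ‖ψ‖ = 1 ∧ ‖φ‖ = 1 ∧
      ⟪φ, ψ⟫_ℂ = (∑ i, starRingEnd ℂ (u i) * v i) / ((d : ℂ) * (ru : ℂ) * (rv : ℂ)) := by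
  have hd0 : (d:ℝ) ≠ 0 := by exact_mod_cast hd.ne'
  have key : ∀ (w : Fin N → ℂ), ((Finset.univ.filter fun i => w i ≠ 0).card = d) →
      (∑ i, if w i = 0 then (0:ℝ) else (d:ℝ)⁻¹) = 1 := by
    intro w hw
    rw [Finset.sum_ite, Finset.sum_const, smul_zero, zero_add,
      Finset.sum_const,
      show (Finset.univ.filter fun x => ¬ (w x = 0)).card = d from hw, nsmul_eq_mul]
    field_simp
  refine ⟨?_, ?_, ?_⟩
  · rw [EuclideanSpace.norm_eq, show (1:ℝ) = Real.sqrt 1 by simp]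
    congr 1
    rw [Fintype.sum_prod_type]
    have h : ∀ i : Fin N, (∑ x : Fin 2 × Fin 2, ‖ψ (i, x)‖^2)
        = if v i = 0 then (0:ℝ) else (d:ℝ)⁻¹ := by
      intro i
      rw [Fintype.sum_prod_type, Fin.sum_univ_two]
      simp only [Fin.sum_univ_two, hψ0, hψ01, hψ11, norm_zero]
      rw [show (0:ℝ)^2 = 0 by ring, zero_add, zero_add]
      exact aux_sq d hd rv hrv (v i) (hvbd i)
    rw [Finset.sum_congr rfl (fun i _ => h i)]
    exact key v hvd
  · rw [EuclideanSpace.norm_eq, show (1:ℝ) = Real.sqrt 1 by simp]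
    congr 1
    rw [Fintype.sum_prod_type]
    have h : ∀ i : Fin N, (∑ x : Fin 2 × Fin 2, ‖φ (i, x)‖^2)
        = if u i = 0 then (0:ℝ) else (d:ℝ)⁻¹ := by
      intro i
      rw [Fintype.sum_prod_type, Fin.sum_univ_two]
      simp only [Fin.sum_univ_two, hφ0, hφ10, hφ11, norm_zero]
      rw [show (0:ℝ)^2 = 0 by ring, zero_add, zero_add]
      exact aux_sq d hd ru hru (u i) (hubd i)
    rw [Finset.sum_congr rfl (fun i _ => h i)]
    exact key u hud
  · rw [PiLp.inner_apply]
    rw [Fintype.sum_prod_type]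
    have hdd : ((Real.sqrt d : ℝ):ℂ) * ((Real.sqrt d : ℝ):ℂ) = (d:ℂ) := by
      rw [← Complex.ofReal_mul, Real.mul_self_sqrt (by positivity)]
      simp
    have e : (((Real.sqrt d : ℝ):ℂ))⁻¹ * (((Real.sqrt d : ℝ):ℂ))⁻¹ = (d:ℂ)⁻¹ := by
      rw [← mul_inv, hdd]
    have hdc : (d:ℂ) ≠ 0 := by exact_mod_cast hd.ne'
    have h : ∀ i : Fin N, (∑ x : Fin 2 × Fin 2, ⟪φ (i, x), ψ (i, x)⟫_ℂ)
        = starRingEnd ℂ (u i) * v i / ((d : ℂ) * (ru : ℂ) * (rv : ℂ)) := by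
      intro i
      rw [Fintype.sum_prod_type, Fin.sum_univ_two]
      simp only [Fin.sum_univ_two, hφ0, hψ0, hφ11, hψ11, RCLike.inner_apply, map_zero,
        zero_mul, mul_zero, zero_add, add_zero]
      rw [map_div₀, map_mul, map_inv₀, Complex.conj_ofReal, Complex.conj_ofReal,
        div_mul_div_comm,
        show ((((Real.sqrt d : ℝ):ℂ))⁻¹ * v i) *
            ((((Real.sqrt d : ℝ):ℂ))⁻¹ * starRingEnd ℂ (u i))
          = ((((Real.sqrt d : ℝ):ℂ))⁻¹ * (((Real.sqrt d : ℝ):ℂ))⁻¹) *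
            (starRingEnd ℂ (u i) * v i) from by ring, e]
      field_simp
    rw [Finset.sum_congr rfl (fun i _ => h i), ← Finset.sum_div]
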